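/- arXiv:1601.06396 — 2 statements merged into one kernel-verified Lean document; each statement's English description precedes it below -/
import Mathlib

section
/- Let Ω ∈ (0,π) and y ∈ ℓ₂(ℤ). Define X̂ ∈ L² of the unit circle by X̂(e^{iω}) = ∑_{k∈ℤ} y_k e^{ikωπ/Ω} for |ω| ≤ Ω and X̂(e^{iω}) = 0 for Ω < |ω| ≤ π. Then the inverse Z-transform x̂ = Z⁻¹X̂ satisfies, for every t ∈ ℤ, x̂(t) = (Ω/π) ∑_{k∈ℤ} y_k sinc(kπ + Ωt), where the series converges absolutely. -/
open MeasureTheory Complex Real Set Filter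

noncomputable section

/-- Two-sided square-summable sequences: membership in `ℓ₂`. -/
def MemL2 (x : ℤ → ℂ) : Prop := Summable fun t => ‖x t‖ ^ 2

/-- Absolutely summable sequences: membership in `ℓ₁(ℤ)`. -/
def MemL1 (x : ℤ → ℂ) : Prop := Summable fun t => ‖x t‖

/-- Inverse Z-transform of a function on `(−π, π]`:
`x(t) = (1/2π) ∫_{−π}^{π} X(e^{iω}) e^{iωt} dω`. -/
def invZ (X : ℝ → ℂ) (t : ℤ) : ℂ :=
  ((1 / (2 * π) : ℝ) : ℂ) *
    ∫ ω in Set.Ioc (-π) π, X ω * Complex.exp (Complex.I * (ω : ℂ) * (t : ℂ))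

/-- `x ∈ ℓ₂^{BL}(S)`: `x` is square-summable and its Z-transform vanishes a.e. outside `S`,
expressed by saying that `x` is the inverse Z-transform of some `X ∈ L²` of the circle
vanishing a.e. outside `S`. -/
def BandLimited (S : Set ℝ) (x : ℤ → ℂ) : Prop :=
  MemL2 x ∧ ∃ X : ℝ → ℂ,
    MemLp X 2 (volume.restrict (Set.Ioc (-π) π)) ∧
    (∀ᵐ ω ∂volume.restrict (Set.Ioc (-π) π), ω ∉ S → X ω = 0) ∧
    ∀ t : ℤ, x t = invZ X t

/-- An element of the class `J`: a proper connected arc of the circle, recorded via the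
angle `mid` of its middle point and its half-length `halfLen` (so `mes(I) = 2·halfLen`);
`halfLen < π` makes the complementary set nonempty. -/
structure Arc where
  mid : ℝ
  halfLen : ℝ
  mid_mem : mid ∈ Set.Ioc (-π) π
  halfLen_pos : 0 < halfLen
  halfLen_lt : halfLen < π

/-- The subset of `(−π, π]` corresponding to the arc `{e^{iω} : |ω − mid| < halfLen (mod 2π)}`. -/
def Arc.set (I : Arc) : Set ℝ :=
  {ω | ω ∈ Set.Ioc (-π) π ∧ ∃ k : ℤ, |ω - I.mid + 2 * π * (k : ℝ)| < I.halfLen}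

/-- One-sided sequences, defined on `{t ∈ ℤ : t ≤ 0}`. -/
abbrev NegSeq := {t : ℤ // t ≤ 0} → ℂ

/-- Membership in `ℓ₂⁻`. -/
def MemL2Neg (x : NegSeq) : Prop := Summable fun t => ‖x t‖ ^ 2

/-- `x ∈ ℓ₂^{−,LBL}(S)`: `x` is the trace on `{t ≤ 0}` of a band-limited sequence with
spectrum in `S`. -/
def LBL (S : Set ℝ) (x : NegSeq) : Prop :=
  ∃ xBL : ℤ → ℂ, BandLimited S xBL ∧ ∀ t : {t : ℤ // t ≤ 0}, x t = xBL t.1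

/-- `p` is the optimal approximation of `x` in `ℓ₂^{−,LBL}(S)`, i.e. a minimizer of
`∑_{t≤0} |p(t) − x(t)|²` over `ℓ₂^{−,LBL}(S)`. -/
def IsOptApprox (S : Set ℝ) (x p : NegSeq) : Prop :=
  LBL S p ∧ ∀ z : NegSeq, LBL S z →
    (∑' t, ‖p t - x t‖ ^ 2) ≤ ∑' t, ‖z t - x t‖ ^ 2

/-- `sinc(u) = sin(u)/u` (with value `1` at `u = 0`). -/
def sinc (u : ℝ) : ℝ := if u = 0 then 1 else Real.sin u / u


section Helpers

lemma coeff_liftIoc {Ω : ℝ} (hΩ : 0 < Ω) (f : ℝ → ℂ) (k : ℤ) :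
    haveI : Fact (0 < 2*Ω) := ⟨by linarith⟩
    fourierCoeff (AddCircle.liftIoc (2*Ω) (-Ω) f) k
      = (1/(2*Ω) : ℝ) • ∫ x in (-Ω)..Ω, (fourier (-k) (x : AddCircle (2*Ω))) * f x := by
  haveI : Fact (0 < 2*Ω) := ⟨by linarith⟩
  rw [fourierCoeff_eq_intervalIntegral _ k (-Ω), show -Ω + 2*Ω = Ω from by ring]
  congr 1
  refine intervalIntegral.integral_congr_ae (Filter.Eventually.of_forall fun x hx => ?_)
  rw [Set.uIoc_of_le (by linarith : (-Ω) ≤ Ω)] at hx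
  have hx' : x ∈ Set.Ioc (-Ω) (-Ω + 2*Ω) := ⟨hx.1, by linarith [hx.2]⟩
  rw [smul_eq_mul, AddCircle.liftIoc_coe_apply hx']

lemma coefG {Ω : ℝ} (hΩ : 0 < Ω) (t k : ℤ) :
    haveI : Fact (0 < 2*Ω) := ⟨by linarith⟩
    fourierCoeff (AddCircle.liftIoc (2*Ω) (-Ω) (fun ω : ℝ => Complex.exp (-(Complex.I * ω * t)))) k
      = ((_root_.sinc ((k:ℝ)*π + Ω*(t:ℝ)) : ℝ) : ℂ) := by
  haveI : Fact (0 < 2*Ω) := ⟨by linarith⟩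
  set c0 : ℝ := (k:ℝ)*π/Ω + t with hc0
  have hΩc0 : Ω * c0 = (k:ℝ)*π + Ω*(t:ℝ) := by rw [hc0, mul_add, mul_div_assoc', mul_comm Ω ((k:ℝ)*π), mul_div_assoc, div_self hΩ.ne', mul_one]
  have key : ∀ x : ℝ, (fourier (-k) (x : AddCircle (2*Ω))) * Complex.exp (-(Complex.I * x * t))
      = Complex.exp ((-(Complex.I * c0)) * x) := by
    intro x
    rw [fourier_coe_apply, ← Complex.exp_add]
    congr 1
    have : (Ω:ℂ) ≠ 0 := Complex.ofReal_ne_zero.mpr hΩ.ne'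
    push_cast [hc0]
    field_simp
    ring
  rw [coeff_liftIoc hΩ]
  simp_rw [key]
  by_cases hc : c0 = 0
  · have h0 : (k:ℝ)*π + Ω*(t:ℝ) = 0 := by rw [← hΩc0, hc, mul_zero]
    simp only [hc, Complex.ofReal_zero, mul_zero, zero_mul, neg_zero, Complex.exp_zero]
    rw [intervalIntegral.integral_const, smul_smul, h0]
    have h1 : (1/(2*Ω)) * (Ω - -Ω) = 1 := by field_simp; ring
    rw [h1, one_smul, _root_.sinc]
    simp
  · have hcne : (-(Complex.I * (c0:ℂ))) ≠ 0 := by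
      simp [Complex.ext_iff, hc]
    rw [integral_exp_mul_complex hcne]
    have e1 : (-(Complex.I * (c0:ℂ))) * (Ω:ℂ) = (↑(-(Ω*c0)) : ℂ) * Complex.I := by push_cast; ring
    have e2 : (-(Complex.I * (c0:ℂ))) * ((-Ω : ℝ):ℂ) = (↑(Ω*c0) : ℂ) * Complex.I := by push_cast; ring
    rw [e1, e2, Complex.exp_mul_I, Complex.exp_mul_I]
    have hne : (k:ℝ)*π + Ω*(t:ℝ) ≠ 0 := by
      rw [← hΩc0]; exact mul_ne_zero hΩ.ne' hc
    rw [_root_.sinc, if_neg hne, ← hΩc0]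
    push_cast
    rw [Complex.cos_neg, Complex.sin_neg]
    have hc0C : (c0:ℂ) ≠ 0 := Complex.ofReal_ne_zero.mpr hc
    have hΩC : (Ω:ℂ) ≠ 0 := Complex.ofReal_ne_zero.mpr hΩ.ne'
    rw [Complex.real_smul]
    push_cast
    field_simp
    ring

end Helpers

/-- for `Ω ∈ (0,π)` and `y ∈ ℓ₂(ℤ)`, let `X̂ ∈ L²` of the circle be given by
`X̂(e^{iω}) = ∑_{k∈ℤ} y_k e^{ikωπ/Ω}` for `|ω| ≤ Ω` and `0` for `Ω < |ω| ≤ π` (characterized here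
by vanishing off `[−Ω,Ω]` and having coefficients `(1/2Ω)∫_{−Ω}^{Ω} X̂(ω) e^{−ikωπ/Ω} dω = y_k`
in the orthogonal basis `{e^{ikωπ/Ω}}` of `L²(−Ω,Ω)`). Then for every `t ∈ ℤ` the inverse
Z-transform satisfies `x̂(t) = (Ω/π) ∑_{k∈ℤ} y_k sinc(kπ + Ωt)`, the series converging
absolutely. -/
theorem stmt_16 (Ω : ℝ) (hΩ : Ω ∈ Set.Ioo 0 π) (y : ℤ → ℂ) (hy : MemL2 y)
    (X : ℝ → ℂ)
    (hXLp : MemLp X 2 (volume.restrict (Set.Ioc (-π) π)))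
    (hXsupp : ∀ ω : ℝ, Ω < |ω| → X ω = 0)
    (hXcoef : ∀ k : ℤ,
      ((1 / (2 * Ω) : ℝ) : ℂ) *
        ∫ ω in Set.Ioc (-Ω) Ω, X ω * Complex.exp (-Complex.I * (k : ℂ) * ((ω * π / Ω : ℝ) : ℂ))
      = y k) :
    ∀ t : ℤ,
      Summable (fun k : ℤ => ‖y k * ((_root_.sinc ((k : ℝ) * π + Ω * (t : ℝ)) : ℝ) : ℂ)‖) ∧
      invZ X t = ((Ω / π : ℝ) : ℂ) *
        ∑' k : ℤ, y k * ((_root_.sinc ((k : ℝ) * π + Ω * (t : ℝ)) : ℝ) : ℂ) := by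
  intro t
  obtain ⟨hΩ0, hΩπ⟩ := hΩ
  haveI : Fact (0 < 2*Ω) := ⟨by linarith⟩
  set X₀ : ℝ → ℂ := hXLp.1.mk X with hX₀
  have hX₀m : StronglyMeasurable X₀ := hXLp.1.stronglyMeasurable_mk
  have hXae : X =ᵐ[volume.restrict (Set.Ioc (-π) π)] X₀ := hXLp.1.ae_eq_mk
  have hsub : Set.Ioc (-Ω) Ω ⊆ Set.Ioc (-π) π :=
    Set.Ioc_subset_Ioc (by linarith) (by linarith)
  have hXaeΩ : X =ᵐ[volume.restrict (Set.Ioc (-Ω) Ω)] X₀ :=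
    ae_restrict_of_ae_restrict_of_subset hsub hXae
  set g : ℝ → ℂ := fun ω => Complex.exp (-(Complex.I * ω * t)) with hg
  set F : AddCircle (2*Ω) → ℂ := AddCircle.liftIoc (2*Ω) (-Ω) X₀ with hF
  set G : AddCircle (2*Ω) → ℂ := AddCircle.liftIoc (2*Ω) (-Ω) g with hG
  have hequiv : Measurable fun z : AddCircle (2*Ω) =>
      ((AddCircle.equivIoc (2*Ω) (-Ω) z : ℝ)) :=
    measurable_subtype_coe.comp (AddCircle.measurableEquivIoc (2*Ω) (-Ω)).measurable
  have hFm : StronglyMeasurable F := hX₀m.comp_measurable hequiv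
  have hgc : Continuous g := by
    apply Complex.continuous_exp.comp
    continuity
  have hGm : StronglyMeasurable G := hgc.stronglyMeasurable.comp_measurable hequiv
  have hGnorm : ∀ z, ‖G z‖ = 1 := by
    intro z
    show ‖g _‖ = 1
    simp [hg, Complex.norm_exp]
  -- Memℒp facts
  have hmk : Measurable ((↑) : ℝ → AddCircle (2*Ω)) := AddCircle.measurable_mk'
  have hFv : MemLp F 2 (volume : Measure (AddCircle (2*Ω))) := by
    rw [← (AddCircle.measurePreserving_mk (2*Ω) (-Ω)).map_eq,
      memLp_map_measure_iff hFm.aestronglyMeasurable hmk.aemeasurable]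
    have h1 : MemLp X 2 (volume.restrict (Set.Ioc (-Ω) (-Ω + 2*Ω))) := by
      rw [show -Ω + 2*Ω = Ω from by ring]
      exact hXLp.mono_measure (Measure.restrict_mono hsub le_rfl)
    refine h1.ae_eq ?_
    have h2 : X =ᵐ[volume.restrict (Set.Ioc (-Ω) (-Ω + 2*Ω))] X₀ := by
      rw [show -Ω + 2*Ω = Ω from by ring]; exact hXaeΩ
    refine h2.trans ?_
    refine (ae_restrict_iff' measurableSet_Ioc).mpr (Filter.Eventually.of_forall fun x hx => ?_)
    exact (AddCircle.liftIoc_coe_apply hx).symm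
  have hFh : MemLp F 2 (AddCircle.haarAddCircle : Measure (AddCircle (2*Ω))) := by
    have := hFv.smul_measure (c := (ENNReal.ofReal (2*Ω))⁻¹)
      (by simp [ENNReal.inv_ne_top]; positivity)
    rwa [AddCircle.volume_eq_smul_haarAddCircle, smul_smul,
      ENNReal.inv_mul_cancel (by positivity) ENNReal.ofReal_ne_top, one_smul] at this
  have hGh : MemLp G 2 (AddCircle.haarAddCircle : Measure (AddCircle (2*Ω))) :=
    MemLp.of_bound hGm.aestronglyMeasurable 1
      (Filter.Eventually.of_forall fun z => (hGnorm z).le)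
  set fF := hFh.toLp F with hfF
  set fG := hGh.toLp G with hfG
  -- coefficients
  have hcoefF : ∀ k : ℤ, fourierCoeff F k = y k := by
    intro k
    rw [coeff_liftIoc hΩ0,
      intervalIntegral.integral_of_le (by linarith : (-Ω) ≤ Ω)]
    rw [← hXcoef k]
    have : ∫ x in Set.Ioc (-Ω) Ω, (fourier (-k) (x : AddCircle (2*Ω))) * X₀ x
        = ∫ x in Set.Ioc (-Ω) Ω, X x * Complex.exp (-Complex.I * k * ((x*π/Ω : ℝ):ℂ)) := by
      refine integral_congr_ae ?_
      filter_upwards [hXaeΩ] with x hx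
      rw [← hx, fourier_coe_apply, mul_comm]
      congr 1
      have hΩC : (Ω:ℂ) ≠ 0 := Complex.ofReal_ne_zero.mpr hΩ0.ne'
      push_cast
      field_simp
    rw [this, Complex.real_smul]
  have hcoefG : ∀ k : ℤ, fourierCoeff G k = ((_root_.sinc ((k:ℝ)*π + Ω*(t:ℝ)) : ℝ) : ℂ) :=
    fun k => coefG hΩ0 t k
  have hreprF : ∀ k : ℤ, fourierBasis.repr fF k = y k := by
    intro k
    rw [fourierBasis_repr]
    rw [← hcoefF k]
    refine integral_congr_ae ?_
    filter_upwards [hFh.coeFn_toLp] with z hz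
    rw [hz]
  have hreprG : ∀ k : ℤ, fourierBasis.repr fG k = ((_root_.sinc ((k:ℝ)*π + Ω*(t:ℝ)) : ℝ) : ℂ) := by
    intro k
    rw [fourierBasis_repr]
    rw [← hcoefG k]
    refine integral_congr_ae ?_
    filter_upwards [hGh.coeFn_toLp] with z hz
    rw [hz]
  -- summability
  have hsumG : Summable (fun k : ℤ => ‖fourierBasis.repr fG k‖^2) := by
    have := (lp.memℓp (fourierBasis.repr fG)).summable (by norm_num : 0 < (2:ENNReal).toReal)
    simpa using this
  have hsum : Summable (fun k : ℤ =>
      ‖y k * ((_root_.sinc ((k:ℝ)*π + Ω*(t:ℝ)) : ℝ) : ℂ)‖) := by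
    refine Summable.of_nonneg_of_le (fun k => norm_nonneg _) (fun k => ?_)
      (((hy.add hsumG).div_const 2))
    rw [norm_mul]
    have h1 : ‖((_root_.sinc ((k:ℝ)*π + Ω*(t:ℝ)) : ℝ) : ℂ)‖ = ‖fourierBasis.repr fG k‖ := by
      rw [hreprG k]
    rw [h1]
    set a := ‖y k‖; set b := ‖fourierBasis.repr fG k‖
    have ha : 0 ≤ a := norm_nonneg _
    have hb : 0 ≤ b := norm_nonneg _
    nlinarith [sq_nonneg (a - b)]
  refine ⟨hsum, ?_⟩
  -- Parseval
  have hPar : ∑' k : ℤ, (inner ℂ fG (fourierBasis k) : ℂ) * inner ℂ (fourierBasis k) fF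
      = (inner ℂ fG fF : ℂ) := fourierBasis.tsum_inner_mul_inner fG fF
  have hterm : ∀ k : ℤ, (inner ℂ fG (fourierBasis k) : ℂ) * inner ℂ (fourierBasis k) fF
      = y k * ((_root_.sinc ((k:ℝ)*π + Ω*(t:ℝ)) : ℝ) : ℂ) := by
    intro k
    have h1 : (inner ℂ (fourierBasis k) fF : ℂ) = y k := by
      rw [← fourierBasis.repr_apply_apply, hreprF]
    have h2 : (inner ℂ fG (fourierBasis k) : ℂ)
        = ((_root_.sinc ((k:ℝ)*π + Ω*(t:ℝ)) : ℝ) : ℂ) := by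
      rw [← inner_conj_symm, ← fourierBasis.repr_apply_apply, hreprG, Complex.conj_ofReal]
    rw [h1, h2, mul_comm]
  have hParsum : (inner ℂ fG fF : ℂ)
      = ∑' k : ℤ, y k * ((_root_.sinc ((k:ℝ)*π + Ω*(t:ℝ)) : ℝ) : ℂ) := by
    rw [← hPar]
    exact tsum_congr hterm
  -- inner as integral
  have hinner : (inner ℂ fG fF : ℂ)
      = ∫ z, (starRingEnd ℂ) (G z) * F z ∂(AddCircle.haarAddCircle : Measure (AddCircle (2*Ω))) := by
    rw [MeasureTheory.L2.inner_def]
    refine integral_congr_ae ?_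
    filter_upwards [hFh.coeFn_toLp, hGh.coeFn_toLp] with z h1 h2
    rw [h1, h2]
    simp [RCLike.inner_apply]
    ring
  -- chain of integrals
  have step1 : ∫ ω in Set.Ioc (-π) π, X ω * Complex.exp (Complex.I * ω * t)
      = ∫ ω in Set.Ioc (-Ω) Ω, X ω * Complex.exp (Complex.I * ω * t) := by
    have hae : ∀ᵐ ω ∂(volume : Measure ℝ),
        X ω * Complex.exp (Complex.I * ω * t)
        = Set.indicator (Set.Ioc (-Ω) Ω) (fun ω => X ω * Complex.exp (Complex.I * ω * t)) ω := by
      rw [ae_iff]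
      refine measure_mono_null ?_ (measure_singleton (-Ω))
      intro ω hω
      simp only [Set.mem_setOf_eq, Set.mem_singleton_iff] at hω ⊢
      by_contra hne
      apply hω
      by_cases hmem : ω ∈ Set.Ioc (-Ω) Ω
      · rw [Set.indicator_of_mem hmem]
      · rw [Set.indicator_of_notMem hmem]
        have : Ω < |ω| := by
          rcases not_and_or.mp hmem with h | h
          · push_neg at h
            have hlt : ω < -Ω := h.lt_of_ne hne
            rw [abs_of_neg (by linarith)]
            linarith
          · push_neg at h
            rw [abs_of_pos (by linarith)]
            exact h
        rw [hXsupp ω this, zero_mul]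
    rw [integral_congr_ae (ae_restrict_of_ae hae),
        integral_congr_ae (ae_restrict_of_ae hae),
        setIntegral_indicator measurableSet_Ioc,
        setIntegral_indicator measurableSet_Ioc,
        Set.inter_eq_self_of_subset_right hsub, Set.inter_self]
  have step2 : ∫ ω in Set.Ioc (-Ω) Ω, X ω * Complex.exp (Complex.I * ω * t)
      = ∫ ω in Set.Ioc (-Ω) (-Ω + 2*Ω), (starRingEnd ℂ) (G ω) * F ω := by
    rw [show -Ω + 2*Ω = Ω from by ring]
    refine integral_congr_ae ?_
    filter_upwards [(ae_restrict_iff' measurableSet_Ioc).mpr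
      (Filter.Eventually.of_forall (fun x (hx : x ∈ Set.Ioc (-Ω) Ω) => hx)), hXaeΩ] with x hx hX0x
    have hx' : x ∈ Set.Ioc (-Ω) (-Ω + 2*Ω) := ⟨hx.1, by linarith [hx.2]⟩
    rw [hG, hF, AddCircle.liftIoc_coe_apply hx', AddCircle.liftIoc_coe_apply hx', ← hX0x, hg]
    rw [mul_comm]
    congr 1
    rw [← Complex.exp_conj]
    congr 1
    simp
  have step3 : ∫ ω in Set.Ioc (-Ω) (-Ω + 2*Ω), (starRingEnd ℂ) (G ω) * F ω
      = ∫ z, (starRingEnd ℂ) (G z) * F z ∂(volume : Measure (AddCircle (2*Ω))) :=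
    AddCircle.integral_preimage (2*Ω) (-Ω) (fun z => (starRingEnd ℂ) (G z) * F z)
  have step4 : ∫ z, (starRingEnd ℂ) (G z) * F z ∂(volume : Measure (AddCircle (2*Ω)))
      = (2*Ω : ℝ) • ∫ z, (starRingEnd ℂ) (G z) * F z
          ∂(AddCircle.haarAddCircle : Measure (AddCircle (2*Ω))) := by
    rw [AddCircle.volume_eq_smul_haarAddCircle, integral_smul_measure,
      ENNReal.toReal_ofReal (by positivity : (0:ℝ) ≤ 2*Ω)]
  -- final assembly
  rw [invZ, step1, step2, step3, step4, ← hinner, hParsum]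
  rw [Complex.real_smul, ← mul_assoc]
  congr 1
  have hπ : (π:ℂ) ≠ 0 := Complex.ofReal_ne_zero.mpr Real.pi_ne_zero
  push_cast
  field_simp
end
end

section
/- For every I ∈ J with mes(I) = 2Ω for some Ω ∈ (0,π), the set ℓ₂^{−,LBL}(I) is a proper subset of ℓ₂⁻: there exists x ∈ ℓ₂⁻ that is not the trace on {t ≤ 0} of any band-limited sequence in ℓ₂^{BL}(I). -/
open MeasureTheory Complex Real Set Filter

noncomputable section

lemma ker_lb (mid Ω : ℝ) (hΩπ : Ω < π) {r : ℝ} (hr : 1/2 ≤ r) (hr1 : r < 1)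
    {ω : ℝ} {k : ℤ} (hθ : |ω - mid + 2*π*(k:ℝ)| < Ω) :
    Real.sqrt (1 + Real.cos Ω) ≤
      ‖(1 : ℂ) - (r:ℂ) * Complex.exp (Complex.I * ((mid + π : ℝ):ℂ)) *
        Complex.exp (-(Complex.I * (ω:ℂ)))‖ := by
  set θ : ℝ := ω - mid + 2*π*(k:ℝ) with hθdef
  have hexp : Complex.exp (Complex.I * ((mid + π : ℝ):ℂ)) * Complex.exp (-(Complex.I * (ω:ℂ)))
      = Complex.exp (Complex.I * ((π - θ : ℝ):ℂ)) := by
    rw [← Complex.exp_add]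
    have : Complex.I * ((mid + π : ℝ):ℂ) + -(Complex.I * (ω:ℂ))
        = Complex.I * ((π - θ : ℝ):ℂ) + (k:ℂ) * (2 * (π:ℂ) * Complex.I) := by
      push_cast [hθdef]; ring
    rw [this, Complex.exp_add, Complex.exp_int_mul_two_pi_mul_I, mul_one]
  rw [mul_assoc, hexp]
  have hform : (1 : ℂ) - (r:ℂ) * Complex.exp (Complex.I * ((π - θ : ℝ):ℂ))
      = ((1 + r * Real.cos θ : ℝ) : ℂ) + ((-(r * Real.sin θ) : ℝ) : ℂ) * Complex.I := by
    rw [mul_comm Complex.I, Complex.exp_mul_I, ← Complex.ofReal_cos, ← Complex.ofReal_sin,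
      Real.cos_pi_sub, Real.sin_pi_sub]
    push_cast; ring
  rw [hform, Complex.norm_add_mul_I]
  have hcos : Real.cos Ω ≤ Real.cos θ := by
    rw [← Real.cos_abs θ]
    exact Real.cos_le_cos_of_nonneg_of_le_pi (abs_nonneg _) hΩπ.le hθ.le
  have hneg1 : -1 ≤ Real.cos θ := Real.neg_one_le_cos θ
  apply Real.sqrt_le_sqrt
  nlinarith [sq_nonneg (1 - r), Real.sin_sq_add_cos_sq θ]

lemma series_eq (X : ℝ → ℂ) (hX : Integrable X (volume.restrict (Set.Ioc (-π) π)))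
    (b : ℝ) {r : ℝ} (hr0 : 0 ≤ r) (hr1 : r < 1) :
    ∑' s : ℕ, ((r:ℂ) * Complex.exp (Complex.I * (b:ℂ)))^s * invZ X (-(s:ℤ))
      = ((1/(2*π):ℝ):ℂ) * ∫ ω in Set.Ioc (-π) π,
          X ω * (1 - (r:ℂ) * Complex.exp (Complex.I*(b:ℂ)) * Complex.exp (-(Complex.I * (ω:ℂ))))⁻¹ := by
  set μ := volume.restrict (Set.Ioc (-π) π) with hμ
  set c : ℂ := (r:ℂ) * Complex.exp (Complex.I * (b:ℂ)) with hc
  have hcnorm : ‖c‖ = r := by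
    rw [hc, norm_mul]
    simp [Complex.norm_exp, _root_.abs_of_nonneg hr0]
  have hker : ∀ ω : ℝ, ‖c * Complex.exp (-(Complex.I * (ω:ℂ)))‖ = r := by
    intro ω
    rw [norm_mul, hcnorm]
    simp [Complex.norm_exp]
  set g : ℕ → ℝ → ℂ := fun s ω => X ω * (c * Complex.exp (-(Complex.I * (ω:ℂ))))^s with hg
  have hterm : ∀ s : ℕ, c^s * invZ X (-(s:ℤ)) = ((1/(2*π):ℝ):ℂ) * ∫ ω, g s ω ∂μ := by
    intro s
    rw [invZ, ← mul_assoc, mul_comm (c^s), mul_assoc, ← MeasureTheory.integral_const_mul]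
    congr 1
    apply integral_congr_ae; filter_upwards with ω
    rw [hg]
    have : Complex.exp (Complex.I * (ω:ℂ) * ((-(s:ℤ) : ℤ):ℂ)) = Complex.exp (-(Complex.I * (ω:ℂ)))^s := by
      rw [← Complex.exp_nat_mul]
      congr 1; push_cast; ring
    rw [this, mul_pow]; ring
  have hgnorm : ∀ s : ℕ, ∀ ω : ℝ, ‖g s ω‖ = r^s * ‖X ω‖ := by
    intro s ω
    rw [hg]; simp only []
    rw [norm_mul, norm_pow, hker]; ring
  have hmeas : ∀ s : ℕ, AEStronglyMeasurable (g s) μ := by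
    intro s
    exact hX.aestronglyMeasurable.mul
      (((Continuous.pow (by continuity) s)).aestronglyMeasurable)
  have hL : ∫⁻ ω, ‖X ω‖₊ ∂μ ≠ ⊤ := hX.2.ne
  have hlin : ∀ s : ℕ, ∫⁻ ω, ‖g s ω‖₊ ∂μ = ENNReal.ofReal (r^s) * ∫⁻ ω, ‖X ω‖₊ ∂μ := by
    intro s
    rw [← MeasureTheory.lintegral_const_mul' _ _ ENNReal.ofReal_ne_top]
    congr 1; funext ω
    rw [← (ofReal_norm (g s ω)).trans (enorm_eq_nnnorm _), ← (ofReal_norm (X ω)).trans (enorm_eq_nnnorm _), hgnorm s ω,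
      ENNReal.ofReal_mul (by positivity)]
  have hfin : ∑' s : ℕ, ∫⁻ ω, ‖g s ω‖₊ ∂μ ≠ ⊤ := by
    simp only [hlin]
    rw [ENNReal.tsum_mul_right, ← ENNReal.ofReal_tsum_of_nonneg (fun n => by positivity)
      (summable_geometric_of_lt_one hr0 hr1)]
    exact ENNReal.mul_ne_top ENNReal.ofReal_ne_top hL
  calc ∑' s : ℕ, c^s * invZ X (-(s:ℤ))
      = ∑' s : ℕ, ((1/(2*π):ℝ):ℂ) * ∫ ω, g s ω ∂μ := by exact tsum_congr hterm
    _ = ((1/(2*π):ℝ):ℂ) * ∑' s : ℕ, ∫ ω, g s ω ∂μ := tsum_mul_left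
    _ = ((1/(2*π):ℝ):ℂ) * ∫ ω, ∑' s : ℕ, g s ω ∂μ := by
        rw [MeasureTheory.integral_tsum hmeas hfin]
    _ = ((1/(2*π):ℝ):ℂ) * ∫ ω, X ω * (1 - c * Complex.exp (-(Complex.I * (ω:ℂ))))⁻¹ ∂μ := by
        congr 1
        apply integral_congr_ae; filter_upwards with ω
        rw [hg]; simp only []
        rw [tsum_mul_left, tsum_geometric_of_norm_lt_one (by rw [hker]; exact hr1)]

lemma harm_big (M : ℝ) : ∃ r : ℝ, 1/2 ≤ r ∧ r < 1 ∧ M < ∑' s:ℕ, r^s / ((s:ℝ)+1) := by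
  obtain ⟨N, hN1, hN⟩ : ∃ N : ℕ, 1 ≤ N ∧ 2*M + 2 ≤ ∑ i ∈ Finset.range N, 1/((i:ℝ)+1) := by
    have h := (tendsto_sum_range_one_div_nat_succ_atTop.eventually_ge_atTop (2*M+2)).and
      (eventually_ge_atTop 1)
    obtain ⟨N, h1, h2⟩ := h.exists
    exact ⟨N, h2, h1⟩
  have hN1' : (1:ℝ) ≤ (N:ℝ) := by exact_mod_cast hN1
  have hNpos : (0:ℝ) < N := by linarith
  set r : ℝ := 1 - 1/(2*(N:ℝ)) with hrdef
  have hrhalf : 1/2 ≤ r := by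
    rw [hrdef]
    have : 1/(2*(N:ℝ)) ≤ 1/2 := by
      apply div_le_div_of_nonneg_left (by norm_num) (by norm_num) (by linarith)
    linarith
  have hr0 : 0 ≤ r := le_trans (by norm_num) hrhalf
  have hr1 : r < 1 := by
    rw [hrdef]; have : 0 < 1/(2*(N:ℝ)) := by positivity
    linarith
  refine ⟨r, hrhalf, hr1, ?_⟩
  have hrN : (1:ℝ)/2 ≤ r^N := by
    have hb : (-2:ℝ) ≤ -(1/(2*(N:ℝ))) := by
      have : 1/(2*(N:ℝ)) ≤ 1/2 := by
        apply div_le_div_of_nonneg_left (by norm_num) (by norm_num) (by linarith)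
      linarith
    calc (1:ℝ)/2 = 1 + (N:ℝ) * (-(1/(2*(N:ℝ)))) := by field_simp; ring
      _ ≤ (1 + -(1/(2*(N:ℝ))))^N := one_add_mul_le_pow hb N
      _ = r^N := by rw [hrdef]; ring_nf
  have hsummable : Summable fun s : ℕ => r^s / ((s:ℝ)+1) := by
    apply Summable.of_nonneg_of_le (fun s => by positivity)
      (fun s => ?_) (summable_geometric_of_lt_one hr0 hr1)
    rw [div_le_iff₀ (by positivity)]
    nlinarith [pow_nonneg hr0 s, (Nat.cast_nonneg s : (0:ℝ) ≤ s)]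
  have hlow : ∑ s ∈ Finset.range N, r^s / ((s:ℝ)+1) ≤ ∑' s:ℕ, r^s / ((s:ℝ)+1) :=
    Summable.sum_le_tsum _ (fun i _ => by positivity) hsummable
  have hterm : ∀ s ∈ Finset.range N, (1/2) * (1/((s:ℝ)+1)) ≤ r^s / ((s:ℝ)+1) := by
    intro s hs
    have hsN : s ≤ N := (Finset.mem_range.1 hs).le
    have : r^N ≤ r^s := pow_le_pow_of_le_one hr0 hr1.le hsN
    have h2 : (1:ℝ)/2 ≤ r^s := le_trans hrN this
    have hpos : (0:ℝ) < (s:ℝ)+1 := by positivity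
    rw [div_eq_mul_inv, one_div ((s:ℝ)+1)]
    calc (1/2) * ((s:ℝ)+1)⁻¹ ≤ r^s * ((s:ℝ)+1)⁻¹ := by
          apply mul_le_mul_of_nonneg_right h2 (by positivity)
      _ = r^s * ((s:ℝ)+1)⁻¹ := rfl
  have hsum2 : (1/2) * (2*M+2) ≤ ∑ s ∈ Finset.range N, r^s / ((s:ℝ)+1) := by
    calc (1/2) * (2*M+2) ≤ (1/2) * ∑ i ∈ Finset.range N, 1/((i:ℝ)+1) := by linarith
      _ = ∑ i ∈ Finset.range N, (1/2) * (1/((i:ℝ)+1)) := by rw [Finset.mul_sum]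
      _ ≤ ∑ s ∈ Finset.range N, r^s / ((s:ℝ)+1) := Finset.sum_le_sum hterm
  have : M + 1 ≤ ∑' s:ℕ, r^s / ((s:ℝ)+1) := by
    have : (1/2:ℝ) * (2*M+2) = M + 1 := by ring
    linarith
  linarith

def negEquiv : ℕ ≃ {t : ℤ // t ≤ 0} where
  toFun n := ⟨-(n:ℤ), neg_nonpos.mpr (Int.natCast_nonneg n)⟩
  invFun t := (-t.1).toNat
  left_inv n := by simp
  right_inv t := by
    ext
    simp [Int.toNat_of_nonneg (neg_nonneg.mpr t.2)]

/-- for every `I ∈ J` (an arc of measure `2Ω`, `Ω ∈ (0,π)`), the set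
`ℓ₂^{−,LBL}(I)` is a proper subset of `ℓ₂⁻`: some `x ∈ ℓ₂⁻` is not the trace on `{t ≤ 0}` of any
band-limited sequence in `ℓ₂^{BL}(I)`. -/
theorem stmt_17 (I : Arc) :
    ∃ x : NegSeq, MemL2Neg x ∧ ¬ LBL I.set x := by
  set b : ℝ := I.mid + π with hb
  refine ⟨fun t => Complex.exp (Complex.I * (b:ℂ) * (t.1:ℂ)) / (1 - (t.1:ℂ)), ?_, ?_⟩
  · -- MemL2Neg
    rw [MemL2Neg]
    rw [← negEquiv.summable_iff]
    have base : Summable (fun n : ℕ => 1/((n:ℝ))^2) :=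
      summable_one_div_nat_pow.mpr one_lt_two
    have hshift := base.comp_injective Nat.succ_injective
    apply hshift.congr
    intro n
    simp only [Function.comp_apply, negEquiv, Equiv.coe_fn_mk]
    have hnum : ‖Complex.exp (Complex.I * (b:ℂ) * ((-(n:ℤ) : ℤ):ℂ))‖ = 1 := by
      simp [Complex.norm_exp]
    have hden : (1 : ℂ) - ((-(n:ℤ) : ℤ):ℂ) = (((n:ℝ)+1 : ℝ):ℂ) := by push_cast; ring
    rw [norm_div, hnum, hden, Complex.norm_real, Real.norm_eq_abs,
      abs_of_pos (by positivity)]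
    rw [Nat.succ_eq_add_one]
    push_cast
    ring_nf
    rw [inv_pow]
    congr 1
    ring
  · -- not LBL
    rintro ⟨xBL, ⟨hL2, X, hX2, hXvan, hXinv⟩, htr⟩
    set μ := volume.restrict (Set.Ioc (-π) π) with hμ
    have : IsFiniteMeasure μ := ⟨by rw [Measure.restrict_apply_univ]; exact measure_Ioc_lt_top⟩
    have hXint : Integrable X μ := hX2.integrable (by norm_num)
    have hδ2 : (0:ℝ) < 1 + Real.cos I.halfLen := by
      have := Real.cos_lt_cos_of_nonneg_of_le_pi I.halfLen_pos.le le_rfl I.halfLen_lt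
      rw [Real.cos_pi] at this; linarith
    set δ : ℝ := Real.sqrt (1 + Real.cos I.halfLen) with hδ
    have hδpos : 0 < δ := Real.sqrt_pos.2 hδ2
    obtain ⟨r, hrhalf, hr1, hgt⟩ :=
      harm_big ((1/(2*π)) * (δ⁻¹ * ∫ ω, ‖X ω‖ ∂μ))
    have hr0 : (0:ℝ) ≤ r := by linarith
    set c : ℂ := (r:ℂ) * Complex.exp (Complex.I * (b:ℂ)) with hc
    -- values of the series
    have hval : ∀ s : ℕ, c^s * invZ X (-(s:ℤ)) = ((r^s/((s:ℝ)+1) : ℝ) : ℂ) := by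
      intro s
      have hts : (-(s:ℤ)) ≤ 0 := neg_nonpos.mpr (Int.natCast_nonneg s)
      have h1 : invZ X (-(s:ℤ)) =
          Complex.exp (Complex.I * (b:ℂ) * ((-(s:ℤ) : ℤ):ℂ)) / (1 - ((-(s:ℤ) : ℤ):ℂ)) :=
        (hXinv _).symm.trans (htr ⟨-(s:ℤ), hts⟩).symm
      rw [h1]
      have hd : (1:ℂ) - ((-(s:ℤ) : ℤ):ℂ) = (((s:ℝ)+1 : ℝ):ℂ) := by push_cast; ring
      have he : c^s * Complex.exp (Complex.I * (b:ℂ) * ((-(s:ℤ) : ℤ):ℂ)) = ((r^s : ℝ):ℂ) := by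
        rw [hc, mul_pow, ← Complex.exp_nat_mul, mul_assoc, ← Complex.exp_add,
          show (s:ℂ)*(Complex.I*(b:ℂ)) + Complex.I*(b:ℂ)*((-(s:ℤ) : ℤ):ℂ) = 0 by push_cast; ring,
          Complex.exp_zero, mul_one]
        norm_cast
      calc c^s * (Complex.exp (Complex.I * (b:ℂ) * ((-(s:ℤ) : ℤ):ℂ)) / (1 - ((-(s:ℤ) : ℤ):ℂ)))
          = (c^s * Complex.exp (Complex.I * (b:ℂ) * ((-(s:ℤ) : ℤ):ℂ))) / (1 - ((-(s:ℤ) : ℤ):ℂ)) := by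
            ring
        _ = ((r^s : ℝ):ℂ) / (((s:ℝ)+1 : ℝ):ℂ) := by rw [he, hd]
        _ = ((r^s/((s:ℝ)+1) : ℝ) : ℂ) := (Complex.ofReal_div _ _).symm
    have h1 : ((∑' s:ℕ, r^s/((s:ℝ)+1) : ℝ) : ℂ) = ∑' s:ℕ, c^s * invZ X (-(s:ℤ)) := by
      rw [Complex.ofReal_tsum]
      exact tsum_congr fun s => (hval s).symm
    have h2 := series_eq X hXint b hr0 hr1
    -- a.e. bound on the integrand
    have haebound : ∀ᵐ ω ∂μ,
        ‖X ω * (1 - c * Complex.exp (-(Complex.I*(ω:ℂ))))⁻¹‖ ≤ δ⁻¹ * ‖X ω‖ := by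
      filter_upwards [hXvan] with ω hv
      by_cases hXω : X ω = 0
      · simp [hXω]
      · have hmem : ω ∈ I.set := by
          by_contra h; exact hXω (hv h)
        obtain ⟨-, k, hk⟩ := hmem
        have hker := ker_lb I.mid I.halfLen I.halfLen_lt hrhalf hr1 hk
        rw [← hb, ← hδ] at hker
        have hnz : δ ≤ ‖(1:ℂ) - c * Complex.exp (-(Complex.I * (ω:ℂ)))‖ := hker
        rw [norm_mul, norm_inv]
        have hinv : ‖(1:ℂ) - c * Complex.exp (-(Complex.I * (ω:ℂ)))‖⁻¹ ≤ δ⁻¹ :=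
          inv_anti₀ hδpos hnz
        calc ‖X ω‖ * ‖(1:ℂ) - c * Complex.exp (-(Complex.I * (ω:ℂ)))‖⁻¹
            ≤ ‖X ω‖ * δ⁻¹ := mul_le_mul_of_nonneg_left hinv (norm_nonneg _)
          _ = δ⁻¹ * ‖X ω‖ := mul_comm _ _
    -- the uniform bound
    have hbound : ‖∑' s:ℕ, c^s * invZ X (-(s:ℤ))‖ ≤ (1/(2*π)) * (δ⁻¹ * ∫ ω, ‖X ω‖ ∂μ) := by
      rw [hc, h2, norm_mul]
      have hcn : ‖((1/(2*π):ℝ):ℂ)‖ = 1/(2*π) := by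
        rw [Complex.norm_real, Real.norm_eq_abs, abs_of_pos (by positivity)]
      rw [hcn]
      apply mul_le_mul_of_nonneg_left _ (by positivity)
      calc ‖∫ ω, X ω * (1 - (r:ℂ)*Complex.exp (Complex.I*(b:ℂ)) * Complex.exp (-(Complex.I * (ω:ℂ))))⁻¹ ∂μ‖
          ≤ ∫ ω, δ⁻¹ * ‖X ω‖ ∂μ := by
            apply norm_integral_le_of_norm_le (hXint.norm.const_mul _)
            filter_upwards [haebound] with ω hω
            rw [hc] at hω
            exact hω
        _ = δ⁻¹ * ∫ ω, ‖X ω‖ ∂μ := MeasureTheory.integral_const_mul _ _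
    have hfinal : ∑' s:ℕ, r^s/((s:ℝ)+1) ≤ (1/(2*π)) * (δ⁻¹ * ∫ ω, ‖X ω‖ ∂μ) := by
      rw [← h1] at hbound
      rwa [Complex.norm_real, Real.norm_eq_abs,
        _root_.abs_of_nonneg (tsum_nonneg fun s => by positivity)] at hbound
    linarith
end
end
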